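/- If an irrational real number x and a rational n/m (m ≥ 1) satisfy |m x − n| < 1/(2m), then n/m is one of the convergents of the continued fraction expansion of x. -/

import Mathlib

/-- The Gauss-map iterates for the continued fraction expansion of `α`. -/
noncomputable def cfXi (α : ℝ) : ℕ → ℝ
  | 0 => Int.fract α
  | k + 1 => Int.fract (cfXi α k)⁻¹

/-- The partial quotients of the continued fraction expansion of `α`. -/
noncomputable def cfA (α : ℝ) : ℕ → ℤ
  | 0 => ⌊α⌋
  | k + 1 => ⌊(cfXi α k)⁻¹⌋

/-- Denominators `m_k` of the convergents: `m_0 = 1`, `m_1 = a_1`,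
`m_{k+2} = a_{k+2} m_{k+1} + m_k`. -/
noncomputable def cfM (α : ℝ) : ℕ → ℤ
  | 0 => 1
  | 1 => cfA α 1
  | k + 2 => cfA α (k + 2) * cfM α (k + 1) + cfM α k

/-- Numerators `n_k` of the convergents: `n_0 = a_0`, `n_1 = a_1 a_0 + 1`,
`n_{k+2} = a_{k+2} n_{k+1} + n_k`. -/
noncomputable def cfN (α : ℝ) : ℕ → ℤ
  | 0 => cfA α 0
  | 1 => cfA α 1 * cfA α 0 + 1
  | k + 2 => cfA α (k + 2) * cfN α (k + 1) + cfN α k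

lemma cfXi_prop (x : ℝ) (hx : Irrational x) :
    ∀ k, Irrational (cfXi x k) ∧ 0 < cfXi x k ∧ cfXi x k < 1 := by
  intro k
  induction k with
  | zero =>
    refine ⟨?_, ?_, Int.fract_lt_one x⟩
    · show Irrational (Int.fract x)
      rw [Int.fract]; exact hx.sub_intCast _
    · exact Int.fract_pos.mpr fun hh => (hx.ne_int ⌊x⌋) hh
  | succ k ih =>
    obtain ⟨hirr, hpos, _⟩ := ih
    refine ⟨?_, ?_, Int.fract_lt_one _⟩
    · show Irrational (Int.fract (cfXi x k)⁻¹)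
      rw [Int.fract]; exact hirr.inv.sub_intCast _
    · exact Int.fract_pos.mpr fun hh => (hirr.inv.ne_int _) hh

lemma cfA_pos (x : ℝ) (hx : Irrational x) (k : ℕ) : 1 ≤ cfA x (k + 1) := by
  obtain ⟨_, hpos, hlt⟩ := cfXi_prop x hx k
  show (1 : ℤ) ≤ ⌊(cfXi x k)⁻¹⌋
  rw [Int.le_floor]
  exact_mod_cast (one_le_inv₀ hpos).mpr hlt.le

lemma cfM_pos (x : ℝ) (hx : Irrational x) : ∀ k, 1 ≤ cfM x k
  | 0 => le_refl _
  | 1 => cfA_pos x hx 0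
  | (k + 2) => by
    have h1 := cfM_pos x hx k
    have h2 := cfM_pos x hx (k + 1)
    have h3 := cfA_pos x hx (k + 1)
    show 1 ≤ cfA x (k + 2) * cfM x (k + 1) + cfM x k
    nlinarith

lemma cfXi_shift (x : ℝ) : ∀ k, cfXi (Int.fract x)⁻¹ k = cfXi x (k + 1)
  | 0 => rfl
  | (k + 1) => by
    show Int.fract (cfXi (Int.fract x)⁻¹ k)⁻¹ = Int.fract (cfXi x (k + 1))⁻¹
    rw [cfXi_shift x k]

lemma cfA_shift (x : ℝ) : ∀ k, cfA (Int.fract x)⁻¹ k = cfA x (k + 1)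
  | 0 => rfl
  | (k + 1) => by
    show ⌊(cfXi (Int.fract x)⁻¹ k)⁻¹⌋ = ⌊(cfXi x (k + 1))⁻¹⌋
    rw [cfXi_shift x k]

lemma cf_shift (x : ℝ) : ∀ k, cfM x (k + 1) = cfN (Int.fract x)⁻¹ k ∧
    cfN x (k + 1) = cfA x 0 * cfN (Int.fract x)⁻¹ k + cfM (Int.fract x)⁻¹ k
  | 0 => by
    constructor
    · show cfA x 1 = cfA (Int.fract x)⁻¹ 0
      rw [cfA_shift]
    · show cfA x 1 * cfA x 0 + 1 = cfA x 0 * cfA (Int.fract x)⁻¹ 0 + 1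
      rw [cfA_shift]; ring
  | 1 => by
    set y := (Int.fract x)⁻¹
    constructor
    · show cfA x 2 * cfM x 1 + cfM x 0 = cfA y 1 * cfA y 0 + 1
      show cfA x 2 * cfA x 1 + 1 = cfA y 1 * cfA y 0 + 1
      rw [cfA_shift, cfA_shift]
    · show cfA x 2 * cfN x 1 + cfN x 0 = cfA x 0 * (cfA y 1 * cfA y 0 + 1) + cfA y 1
      show cfA x 2 * (cfA x 1 * cfA x 0 + 1) + cfA x 0
          = cfA x 0 * (cfA y 1 * cfA y 0 + 1) + cfA y 1
      rw [cfA_shift, cfA_shift]; ring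
  | (k + 2) => by
    obtain ⟨hm1, hn1⟩ := cf_shift x k
    obtain ⟨hm2, hn2⟩ := cf_shift x (k + 1)
    set y := (Int.fract x)⁻¹
    constructor
    · show cfA x (k + 3) * cfM x (k + 2) + cfM x (k + 1)
          = cfA y (k + 2) * cfN y (k + 1) + cfN y k
      rw [hm1, hm2, cfA_shift]
    · show cfA x (k + 3) * cfN x (k + 2) + cfN x (k + 1)
          = cfA x 0 * (cfA y (k + 2) * cfN y (k + 1) + cfN y k)
            + (cfA y (k + 2) * cfM y (k + 1) + cfM y k)
      rw [hn1, hn2, cfA_shift]; ring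

lemma convergent_eq (k : ℕ) : ∀ (x : ℝ), Irrational x →
    ((Real.convergent x k : ℚ) : ℝ) = (cfN x k : ℝ) / (cfM x k : ℝ) := by
  induction k with
  | zero =>
    intro x hx
    rw [Real.convergent_zero]
    show ((⌊x⌋ : ℚ) : ℝ) = (cfN x 0 : ℝ) / ((1 : ℤ) : ℝ)
    have : cfN x 0 = ⌊x⌋ := rfl
    rw [this]
    push_cast
    rw [div_one]
  | succ k ih =>
    intro x hx
    have hyirr : Irrational (Int.fract x)⁻¹ := (cfXi_prop x hx 0).1.inv
    have hcNy : ((cfN (Int.fract x)⁻¹ k : ℤ) : ℝ) ≠ 0 := by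
      obtain ⟨hm, _⟩ := cf_shift x k
      have h1 := cfM_pos x hx (k + 1)
      rw [hm] at h1
      have h2 : (1 : ℝ) ≤ ((cfN (Int.fract x)⁻¹ k : ℤ) : ℝ) := by exact_mod_cast h1
      linarith
    rw [Real.convergent_succ]
    push_cast
    rw [ih (Int.fract x)⁻¹ hyirr]
    obtain ⟨hm, hn⟩ := cf_shift x k
    rw [hm, hn]
    have hA0 : cfA x 0 = ⌊x⌋ := rfl
    rw [hA0]
    push_cast
    rw [inv_div, add_div, mul_div_assoc, div_self hcNy, mul_one]

theorem good_approx_is_convergent (x : ℝ) (hx : Irrational x) (n : ℤ) (m : ℕ) (hm : 1 ≤ m)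
    (h : |(m : ℝ) * x - (n : ℝ)| < 1 / (2 * (m : ℝ))) :
    ∃ k : ℕ, (n : ℝ) / (m : ℝ) = (cfN x k : ℝ) / (cfM x k : ℝ) := by
  have hm0 : (0 : ℝ) < (m : ℝ) := by exact_mod_cast hm
  set q : ℚ := (n : ℚ) / (m : ℚ) with hq
  have hden : (q.den : ℤ) ∣ (m : ℤ) := by
    have hqd : q = Rat.divInt n (m : ℤ) := by
      rw [hq, Rat.divInt_eq_div]; push_cast; ring
    rw [hqd]
    exact Rat.den_dvd n m
  have hdenle : (q.den : ℝ) ≤ (m : ℝ) := by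
    have := Int.le_of_dvd (by exact_mod_cast hm0) hden
    exact_mod_cast this
  have hdenpos : (0 : ℝ) < (q.den : ℝ) := by exact_mod_cast q.pos
  have hqr : (q : ℝ) = (n : ℝ) / (m : ℝ) := by rw [hq]; push_cast; ring
  have habs : |x - (q : ℝ)| < 1 / (2 * (q.den : ℝ) ^ 2) := by
    have hsub : x - (q : ℝ) = ((m : ℝ) * x - (n : ℝ)) / (m : ℝ) := by
      rw [hqr]; field_simp
    have h1 : |x - (q : ℝ)| = |(m : ℝ) * x - (n : ℝ)| / (m : ℝ) := by
      rw [hsub, abs_div, abs_of_pos hm0]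
    rw [h1]
    have hA := abs_nonneg ((m : ℝ) * x - (n : ℝ))
    have hAlt : |(m : ℝ) * x - (n : ℝ)| * (2 * (m : ℝ)) < 1 :=
      (lt_div_iff₀ (by positivity)).mp h
    have h2 : |(m : ℝ) * x - (n : ℝ)| / (m : ℝ) < 1 / (2 * (m : ℝ) ^ 2) := by
      rw [div_lt_div_iff₀ hm0 (by positivity)]
      nlinarith [mul_lt_mul_of_pos_right hAlt hm0]
    refine h2.trans_le ?_
    apply one_div_le_one_div_of_le (by positivity)
    nlinarith
  obtain ⟨k, hk⟩ := Real.exists_rat_eq_convergent habs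
  refine ⟨k, ?_⟩
  rw [← hqr, hk]
  exact convergent_eq k x hx
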